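/- The modified Bessel function I₀ satisfies the asymptotic I₀(x) ~ (2πx)^{−1/2}·e^{x} as x → +∞; that is, lim_{x→∞} I₀(x)·√(2πx)·e^{−x} = 1. -/

import Mathlib

open Real MeasureTheory Filter Set Topology intervalIntegral

/-- The modified Bessel function of the first kind,
`I₀(x) = ∑ₖ (x/2)^(2k) / (k!)²`. -/
noncomputable def besselI0 (x : ℝ) : ℝ :=
  ∑' k : ℕ, (x / 2) ^ (2 * k) / (Nat.factorial k : ℝ) ^ 2


lemma cosMomentOdd (k : ℕ) : ∫ θ in (0:ℝ)..π, Real.cos θ ^ (2*k+1) = 0 := by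
  induction k with
  | zero => simp
  | succ n ih =>
    have h := integral_cos_pow (a := 0) (b := π) (2*n+1)
    have : 2 * (n+1) + 1 = 2*n+1+2 := by ring
    rw [this, h]
    simp [ih]

lemma cosMomentEven (k : ℕ) :
    ∫ θ in (0:ℝ)..π, Real.cos θ ^ (2*k) = π * Nat.factorial (2*k) / (4^k * (Nat.factorial k : ℝ)^2) := by
  induction k with
  | zero => simp
  | succ n ih =>
    have h := integral_cos_pow (a := 0) (b := π) (2*n)
    have h2 : 2 * (n+1) = 2*n+2 := by ring
    rw [h2, h, ih]
    simp only [Real.sin_pi, Real.sin_zero, mul_zero, zero_mul, sub_zero, zero_div, zero_add]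
    have hfn : (Nat.factorial n : ℝ) ≠ 0 := Nat.cast_ne_zero.mpr n.factorial_ne_zero
    have e1 : (Nat.factorial (2*n+2) : ℝ) = (2*n+2) * ((2*n+1) * Nat.factorial (2*n)) := by
      push_cast [show 2*n+2 = (2*n+1)+1 by ring, Nat.factorial_succ]
      ring
    have e2 : (Nat.factorial (n+1) : ℝ) = (n+1) * (Nat.factorial n : ℝ) := by
      push_cast [Nat.factorial_succ]; ring
    rw [e1, e2]
    have h4 : (4:ℝ)^(n+1) = 4 * 4^n := by ring
    rw [h4]
    field_simp
    push_cast
    ring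


lemma besselI0_eq_integral (x : ℝ) :
    besselI0 x = π⁻¹ * ∫ θ in (0:ℝ)..π, Real.exp (x * Real.cos θ) := by
  -- term-by-term integration over Ioc 0 π
  set μ := volume.restrict (Ioc (0:ℝ) π) with hμ
  set F : ℕ → ℝ → ℝ := fun n θ => (x * Real.cos θ) ^ n / Nat.factorial n with hF
  have hcont : ∀ n, Continuous (F n) := by
    intro n; fun_prop
  have hF_int : ∀ n, Integrable (F n) μ := fun n =>
    (hcont n).integrableOn_Ioc.integrable
  have hnorm_le : ∀ n θ, θ ∈ Ioc (0:ℝ) π → ‖F n θ‖ ≤ |x| ^ n / Nat.factorial n := by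
    intro n θ _
    have hb : |x * Real.cos θ| ≤ |x| := by
      rw [abs_mul]
      exact mul_le_of_le_one_right (abs_nonneg x) (Real.abs_cos_le_one θ)
    rw [hF]
    simp only [norm_div, norm_pow, Real.norm_eq_abs, Nat.abs_cast]
    gcongr
  have hF_sum : Summable (fun n => ∫ θ, ‖F n θ‖ ∂μ) := by
    apply Summable.of_nonneg_of_le (fun n => integral_nonneg (fun θ => norm_nonneg _))
      (fun n => ?_) ((Real.summable_pow_div_factorial |x|).mul_left π)
    calc ∫ θ, ‖F n θ‖ ∂μ ≤ ∫ _ in Ioc (0:ℝ) π, (|x| ^ n / Nat.factorial n) := by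
          apply setIntegral_mono_on (hF_int n).norm ((integrableOn_const_iff (by finiteness)).mpr ?_)
            measurableSet_Ioc (hnorm_le n)
          · right; rw [Real.volume_Ioc]; exact ENNReal.ofReal_lt_top
      _ = π * (|x| ^ n / Nat.factorial n) := by
          rw [setIntegral_const, smul_eq_mul, Real.volume_real_Ioc_of_le pi_pos.le, sub_zero]
  have hsum := hasSum_integral_of_summable_integral_norm (μ := μ) hF_int hF_sum
  have htsum : ∀ θ : ℝ, (∑' n, F n θ) = Real.exp (x * Real.cos θ) := by
    intro θ
    rw [Real.exp_eq_exp_ℝ, NormedSpace.exp_eq_tsum_div]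
  simp only [htsum] at hsum
  -- each term
  have hterm : ∀ n : ℕ, (∫ θ, F n θ ∂μ) =
      x ^ n / Nat.factorial n * ∫ θ in (0:ℝ)..π, Real.cos θ ^ n := by
    intro n
    rw [hμ, ← intervalIntegral.integral_of_le pi_pos.le, ← intervalIntegral.integral_const_mul]
    congr 1; ext θ; rw [hF]; simp only [mul_pow]; ring
  simp only [hterm] at hsum
  -- multiply by π⁻¹
  have hsum2 := hsum.mul_left π⁻¹
  -- reindex over even indices
  have hinj : Function.Injective (fun k : ℕ => 2 * k) := mul_right_injective₀ two_ne_zero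
  have hzero : ∀ n ∉ Set.range (fun k : ℕ => 2 * k),
      π⁻¹ * (x ^ n / Nat.factorial n * ∫ θ in (0:ℝ)..π, Real.cos θ ^ n) = 0 := by
    intro n hn
    obtain ⟨k, rfl⟩ : ∃ k, n = 2 * k + 1 := by
      rcases Nat.even_or_odd n with h | h
      · obtain ⟨c, hc⟩ := h
        exact absurd ⟨c, by show 2 * c = n; omega⟩ hn
      · obtain ⟨c, hc⟩ := h
        exact ⟨c, hc⟩
    rw [cosMomentOdd]; ring
  have hsum3 := (hinj.hasSum_iff hzero).mpr hsum2
  have heq : ∀ k : ℕ, (x / 2) ^ (2 * k) / (Nat.factorial k : ℝ) ^ 2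
      = ((fun n => π⁻¹ * (x ^ n / Nat.factorial n *
      ∫ θ in (0:ℝ)..π, Real.cos θ ^ n)) ∘ (fun k : ℕ => 2 * k)) k := by
    intro k
    simp only [Function.comp_apply]
    rw [cosMomentEven]
    have h1 : ((2*k).factorial : ℝ) ≠ 0 := Nat.cast_ne_zero.mpr (Nat.factorial_ne_zero _)
    have h2 : ((k).factorial : ℝ) ≠ 0 := Nat.cast_ne_zero.mpr (Nat.factorial_ne_zero _)
    have h3 : (x / 2) ^ (2 * k) = x ^ (2 * k) / 4 ^ k := by
      rw [div_pow, pow_mul, pow_mul]; norm_num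
    rw [h3]
    field_simp
  rw [besselI0, intervalIntegral.integral_of_le pi_pos.le, ← hμ]
  exact (hsum3.congr_fun heq).tsum_eq

lemma laplace :
    Filter.Tendsto (fun x : ℝ => Real.sqrt x * ∫ θ in (0:ℝ)..π, Real.exp (x * (Real.cos θ - 1)))
      Filter.atTop (nhds (Real.sqrt (π/2))) := by
  set G : ℝ → ℝ → ℝ := fun x t => (Ioc (0:ℝ) (π * Real.sqrt x)).indicator
      (fun t => Real.exp (x * (Real.cos (t / Real.sqrt x) - 1))) t with hG
  have h0 : ∀ᵐ t : ℝ, t ≠ (0:ℝ) := by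
    rw [ae_iff]
    have : {t : ℝ | ¬ t ≠ 0} = {0} := by ext t; simp
    rw [this]
    exact Real.volume_singleton
  have key : Tendsto (fun x => ∫ t, G x t) atTop
      (𝓝 (∫ t, (Ioi (0:ℝ)).indicator (fun t => Real.exp (-(t^2)/2)) t)) := by
    apply MeasureTheory.tendsto_integral_filter_of_dominated_convergence
        (bound := fun t => Real.exp (-(2/π^2) * t^2))
    · filter_upwards with x
      exact ((Real.continuous_exp.comp (by fun_prop)).aestronglyMeasurable).indicator
        measurableSet_Ioc
    · filter_upwards [eventually_ge_atTop (1:ℝ)] with x hx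
      filter_upwards with t
      simp only [hG]
      by_cases ht : t ∈ Ioc (0:ℝ) (π * Real.sqrt x)
      · rw [indicator_of_mem ht, Real.norm_eq_abs, Real.abs_exp, Real.exp_le_exp]
        have hx0 : (0:ℝ) < x := by linarith
        have hsx : 0 < Real.sqrt x := Real.sqrt_pos.mpr hx0
        set u := t / Real.sqrt x with hu
        have hu0 : 0 < u := div_pos ht.1 hsx
        have huπ : u ≤ π := by
          rw [hu, div_le_iff₀ hsx]
          calc t ≤ π * Real.sqrt x := ht.2
            _ = π * Real.sqrt x := rfl
        have hcos : Real.cos u ≤ 1 - 2/π^2 * u^2 :=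
          Real.cos_le_one_sub_mul_cos_sq (by rw [abs_of_nonneg hu0.le]; exact huπ)
        have hxu : x * u^2 = t^2 := by
          rw [hu, div_pow, Real.sq_sqrt hx0.le]
          field_simp
        rw [← hxu]
        nlinarith [mul_le_mul_of_nonneg_left hcos hx0.le]
      · rw [indicator_of_notMem ht, norm_zero]
        positivity
    · exact integrable_exp_neg_mul_sq (by positivity)
    · filter_upwards [h0] with t ht
      rcases lt_or_gt_of_ne ht with hneg | hpos
      · have hz : ∀ x : ℝ, G x t = 0 := fun x =>
          indicator_of_notMem (fun hmem => absurd hmem.1 (not_lt.mpr hneg.le)) _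
        have hz2 : (Ioi (0:ℝ)).indicator (fun t => Real.exp (-(t^2)/2)) t = 0 :=
          indicator_of_notMem (by simpa using hneg.not_gt) _
        simp only [hz, hz2]
        exact tendsto_const_nhds
      · rw [indicator_of_mem (Set.mem_Ioi.mpr hpos)]
        have hinner : Tendsto (fun x : ℝ => x * (Real.cos (t / Real.sqrt x) - 1))
            atTop (𝓝 (-(t^2)/2)) := by
          apply tendsto_of_tendsto_of_tendsto_of_le_of_le'
              (g := fun _ : ℝ => -(t^2)/2) (h := fun x : ℝ => -(t^2)/2 + t^4 * (5/96) / x)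
              tendsto_const_nhds
          · have hdiv : Tendsto (fun x : ℝ => t^4 * (5/96) / x) atTop (𝓝 0) :=
              Filter.Tendsto.div_atTop tendsto_const_nhds tendsto_id
            simpa using tendsto_const_nhds.add hdiv
          · filter_upwards [eventually_gt_atTop (0:ℝ)] with x hx0
            have hsx : 0 < Real.sqrt x := Real.sqrt_pos.mpr hx0
            have hxu : x * (t / Real.sqrt x)^2 = t^2 := by
              rw [div_pow, Real.sq_sqrt hx0.le]; field_simp
            have hc := Real.one_sub_sq_div_two_le_cos (x := t / Real.sqrt x)
            nlinarith
          · filter_upwards [eventually_ge_atTop (max 1 (t^2))] with x hx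
            have hx0 : (0:ℝ) < x := lt_of_lt_of_le one_pos ((le_max_left _ _).trans hx)
            have hsx : 0 < Real.sqrt x := Real.sqrt_pos.mpr hx0
            have hu1 : |t / Real.sqrt x| ≤ 1 := by
              rw [abs_div, abs_of_nonneg (Real.sqrt_nonneg x), div_le_one hsx]
              rw [← Real.sqrt_sq_eq_abs]
              exact Real.sqrt_le_sqrt (le_trans (le_max_right _ _) hx)
            have hb := Real.cos_bound hu1
            have habs : |t / Real.sqrt x|^4 = (t / Real.sqrt x)^4 := by
              rw [← abs_pow, abs_of_nonneg (by positivity)]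
            rw [habs] at hb
            have hxu : x * (t / Real.sqrt x)^2 = t^2 := by
              rw [div_pow, Real.sq_sqrt hx0.le]; field_simp
            have hxu4 : x * (t / Real.sqrt x)^4 = t^4 / x := by
              have hs4 : Real.sqrt x ^ 4 = x ^ 2 := by
                rw [show (4:ℕ) = 2*2 from rfl, pow_mul, Real.sq_sqrt hx0.le]
              rw [div_pow, hs4]
              field_simp
            have hub := (abs_le.mp hb).2
            have h1 : x * (Real.cos (t / Real.sqrt x) - 1) ≤
                -(x * (t / Real.sqrt x)^2)/2 + (x * (t / Real.sqrt x)^4) * (5/96) := by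
              nlinarith [mul_le_mul_of_nonneg_left hub hx0.le]
            rw [hxu, hxu4] at h1
            calc x * (Real.cos (t / Real.sqrt x) - 1) ≤ -t^2/2 + t^4/x * (5/96) := h1
              _ = -(t^2)/2 + t^4 * (5/96) / x := by ring
        have hcomp := (Real.continuous_exp.tendsto _).comp hinner
        apply Tendsto.congr' _ hcomp
        filter_upwards [eventually_ge_atTop (max 1 ((t/π)^2))] with x hx
        have hx0 : (0:ℝ) < x := lt_of_lt_of_le one_pos ((le_max_left _ _).trans hx)
        have htle : t ≤ π * Real.sqrt x := by
          have h1 : Real.sqrt ((t/π)^2) ≤ Real.sqrt x :=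
            Real.sqrt_le_sqrt ((le_max_right _ _).trans hx)
          rw [Real.sqrt_sq_eq_abs] at h1
          have h2 : t/π ≤ Real.sqrt x := (le_abs_self _).trans h1
          calc t = π * (t/π) := by field_simp
            _ ≤ π * Real.sqrt x := mul_le_mul_of_nonneg_left h2 pi_pos.le
        simp only [hG, Function.comp_apply]
        exact (indicator_of_mem (Set.mem_Ioc.mpr ⟨hpos, htle⟩)
          (fun s => Real.exp (x * (Real.cos (s / Real.sqrt x) - 1)))).symm
  have hval : (∫ t, (Ioi (0:ℝ)).indicator (fun t => Real.exp (-(t^2)/2)) t)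
      = Real.sqrt (π/2) := by
    rw [MeasureTheory.integral_indicator measurableSet_Ioi]
    have he : ∀ t : ℝ, Real.exp (-(t^2)/2) = Real.exp (-(1/2) * t^2) := fun t => by ring_nf
    simp_rw [he]
    rw [integral_gaussian_Ioi,
      show π / (1/2) = 2^2 * (π/2) by ring,
      Real.sqrt_mul (by positivity) (π/2), Real.sqrt_sq (by norm_num : (0:ℝ) ≤ 2)]
    ring
  have hequ : (fun x => ∫ t, G x t) =ᶠ[atTop]
      (fun x => Real.sqrt x * ∫ θ in (0:ℝ)..π, Real.exp (x * (Real.cos θ - 1))) := by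
    filter_upwards [eventually_ge_atTop (1:ℝ)] with x hx
    have hx0 : (0:ℝ) < x := by linarith
    have hsx : 0 < Real.sqrt x := Real.sqrt_pos.mpr hx0
    simp only [hG]
    rw [MeasureTheory.integral_indicator measurableSet_Ioc,
      ← intervalIntegral.integral_of_le (by positivity : (0:ℝ) ≤ π * Real.sqrt x),
      intervalIntegral.integral_comp_div (fun θ => Real.exp (x * (Real.cos θ - 1))) hsx.ne',
      zero_div, mul_div_assoc, div_self hsx.ne', mul_one, smul_eq_mul]
  exact Filter.Tendsto.congr' hequ (hval ▸ key)

/-- `I₀(x) ~ (2πx)^{−1/2} e^x` as `x → ∞`, i.e.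
`I₀(x) √(2πx) e^{−x} → 1`. -/
theorem statement3 :
    Filter.Tendsto (fun x : ℝ => besselI0 x * Real.sqrt (2 * Real.pi * x) * Real.exp (-x))
      Filter.atTop (nhds 1) := by
  have hlim := laplace
  have heq : (fun x : ℝ => π⁻¹ * Real.sqrt (2*π) *
      (Real.sqrt x * ∫ θ in (0:ℝ)..π, Real.exp (x * (Real.cos θ - 1)))) =ᶠ[atTop]
      (fun x : ℝ => besselI0 x * Real.sqrt (2 * Real.pi * x) * Real.exp (-x)) := by
    filter_upwards [eventually_ge_atTop (0:ℝ)] with x hx0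
    rw [besselI0_eq_integral]
    have h1 : (∫ θ in (0:ℝ)..π, Real.exp (x * Real.cos θ)) * Real.exp (-x)
        = ∫ θ in (0:ℝ)..π, Real.exp (x * (Real.cos θ - 1)) := by
      rw [← intervalIntegral.integral_mul_const]
      apply intervalIntegral.integral_congr
      intro θ _
      show Real.exp (x * Real.cos θ) * Real.exp (-x) = Real.exp (x * (Real.cos θ - 1))
      rw [← Real.exp_add]
      ring_nf
    have h2 : Real.sqrt (2*π*x) = Real.sqrt (2*π) * Real.sqrt x :=
      Real.sqrt_mul (by positivity) x
    rw [h2, ← h1]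
    ring
  have hv : π⁻¹ * Real.sqrt (2*π) * Real.sqrt (π/2) = 1 := by
    rw [mul_assoc, ← Real.sqrt_mul (by positivity) (π/2),
      show 2*π*(π/2) = π^2 by ring, Real.sqrt_sq pi_pos.le]
    field_simp
  have h3 := (Filter.Tendsto.const_mul (π⁻¹ * Real.sqrt (2*π)) hlim).congr' heq
  rwa [hv] at h3
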